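/- Let π have a simple alignment (i,j) with i = π(1), j = π(n), and let π' swap the images: π'(1) = j, π'(n) = i. Let N and N' be the necklaces of π and π'. If X ∈ Int(N'(π')), X is weakly separated from N_1, and X ≠ N'_1, then X ∈ Int(N(π)). -/
import Mathlib

open Finset

variable {n : ℕ}

/-- Position of `x` in the cyclic order on `Fin n` starting at `i`. -/
def cpos (i x : Fin n) : ℕ := ((x - i : Fin n) : ℕ)

/-- `X ≪_i Y`: every element of `X \\ Y` precedes every element of `Y \\ X`
in the cyclic order starting at `i`. -/
def Ll (i : Fin n) (X Y : Finset (Fin n)) : Prop :=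
  ∀ x ∈ X \ Y, ∀ y ∈ Y \ X, cpos i x < cpos i y

/-- `X` and `Y` are weakly separated. -/
def WSep (X Y : Finset (Fin n)) : Prop := ∃ i : Fin n, Ll i X Y

/-- The Grassmann necklace associated with a permutation `π`:
`N_i = { k : k ≤_i π⁻¹(k) }`. -/
def necklaceOf (π : Equiv.Perm (Fin n)) (i : Fin n) : Finset (Fin n) :=
  Finset.univ.filter fun k => cpos i k ≤ cpos i (π.symm k)

/-- `(i, j)` is an alignment of `π`: the quadruple `π⁻¹(i), i, j, π⁻¹(j)`
occurs in this cyclic order (`j = π(j)` allowed, `i = π(i)` not). -/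
def IsAlignment (π : Equiv.Perm (Fin n)) (i j : Fin n) : Prop :=
  0 < cpos (π.symm i) i ∧
  cpos (π.symm i) i < cpos (π.symm i) j ∧
  cpos (π.symm i) j ≤ cpos (π.symm i) (π.symm j)

/-- The interior of a necklace `N`: `r`-sets `X` with `N_i ≪_i X` for all `i`. -/
def Interior (r : ℕ) (N : Fin n → Finset (Fin n)) : Set (Finset (Fin n)) :=
  {X | X.card = r ∧ ∀ i, Ll i (N i) X}

lemma cpos_val (i x : Fin n) :
    cpos i x = if i.val ≤ x.val then x.val - i.val else x.val + n - i.val := by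
  have hx := x.isLt; have hi := i.isLt
  show ((x - i : Fin n) : ℕ) = _
  rw [Fin.sub_def]
  rcases Nat.lt_or_ge x.val i.val with hc | hc
  swap
  · rw [if_pos hc]
    show (n - i.val + x.val) % n = _
    have e : n - i.val + x.val = (x.val - i.val) + n := by omega
    rw [e, Nat.add_mod_right, Nat.mod_eq_of_lt (by omega)]
  · rw [if_neg (by omega)]
    show (n - i.val + x.val) % n = _
    have e : n - i.val + x.val = x.val + n - i.val := by omega
    rw [e, Nat.mod_eq_of_lt (by omega)]

lemma cpos_lt (i x : Fin n) : cpos i x < n := (x - i).isLt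

lemma cpos_or (i x : Fin n) :
    (i.val ≤ x.val ∧ cpos i x = x.val - i.val) ∨
    (x.val < i.val ∧ cpos i x = x.val + n - i.val) := by
  have h := cpos_val i x
  split_ifs at h with hc
  · exact Or.inl ⟨hc, h⟩
  · exact Or.inr ⟨by omega, h⟩

lemma cpos_inj [NeZero n] {i x y : Fin n} (h : cpos i x = cpos i y) : x = y :=
  sub_left_injective (Fin.val_injective h)

lemma mem_necklaceOf [NeZero n] {π : Equiv.Perm (Fin n)} {i k : Fin n} :
    k ∈ necklaceOf π i ↔ cpos i k ≤ cpos i (π.symm k) := by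
  simp [necklaceOf]

set_option maxHeartbeats 1000000 in
/-- Proposition 2: with a simple alignment `(i, j) = (π(1), π(n))` (here
`n ≡ 0`) and `π'` obtained by swapping the two images, any
`X ∈ Int(N(π'))` which is weakly separated from `N_1` and distinct from
`N'_1` belongs to `Int(N(π))`. -/
theorem simple_alignment_interior [NeZero n] (π : Equiv.Perm (Fin n))
    (h : IsAlignment π (π 1) (π 0)) (r : ℕ)
    (hr : ∀ i, (necklaceOf π i).card = r)
    (X : Finset (Fin n))
    (hX : X ∈ Interior r (necklaceOf (π * Equiv.swap 1 0)))
    (hsep : WSep X (necklaceOf π 1))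
    (hne : X ≠ necklaceOf (π * Equiv.swap 1 0) 1) :
    X ∈ Interior r (necklaceOf π) := by
  set π' : Equiv.Perm (Fin n) := π * Equiv.swap 1 0 with hπ'def
  obtain ⟨hcard, hint⟩ := hX
  have val_ne : ∀ {x y : Fin n}, x ≠ y → x.val ≠ y.val :=
    fun hxy hc => hxy (Fin.val_injective hc)
  have hsymm : ∀ k, π'.symm k = Equiv.swap 1 0 (π.symm k) := by
    intro k
    simp [hπ'def, Equiv.Perm.mul_def, Equiv.swap_apply_def]
  set a : Fin n := π 1 with hadef
  set b : Fin n := π 0 with hbdef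
  have hsa : π.symm a = 1 := by rw [hadef]; exact Equiv.symm_apply_apply π 1
  have hsb : π.symm b = 0 := by rw [hbdef]; exact Equiv.symm_apply_apply π 0
  have h'a : π'.symm a = 0 := by rw [hsymm, hsa, Equiv.swap_apply_left]
  have h'b : π'.symm b = 1 := by rw [hsymm, hsb, Equiv.swap_apply_right]
  have hof : ∀ k, k ≠ a → k ≠ b → π'.symm k = π.symm k := by
    intro k hka hkb
    rw [hsymm]
    refine Equiv.swap_apply_of_ne_of_ne ?_ ?_
    · intro hc
      exact hka (by rw [hadef, ← hc, Equiv.apply_symm_apply])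
    · intro hc
      exact hkb (by rw [hbdef, ← hc, Equiv.apply_symm_apply])
  have ha1 : 0 < cpos 1 a := by have := h.1; rwa [hsa] at this
  have hab : cpos 1 a < cpos 1 b := by have := h.2.1; rwa [hsa] at this
  have hbn : cpos 1 b < n := cpos_lt 1 b
  have hn3 : 3 ≤ n := by
    have han : cpos 1 a < n := cpos_lt 1 a
    have h1n : cpos 1 (1 : Fin n) = 0 := by
      show ((1 - 1 : Fin n) : ℕ) = 0
      rw [sub_self]; rfl
    rcases Nat.lt_or_ge n 3 with hc | hc
    · -- n ≤ 2 : cpos values are < n ≤ 2, but 0 < pa < pb < n forces n ≥ 3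
      omega
    · exact hc
  have h0v : (0 : Fin n).val = 0 := rfl
  have h1v : (1 : Fin n).val = 1 := by
    rw [Fin.val_one', Nat.mod_eq_of_lt (by omega)]
  have h2v : (1 + 1 : Fin n).val = 2 := by
    rw [Fin.val_add, h1v, Nat.mod_eq_of_lt (by omega)]
  have hav := a.isLt
  have hbv := b.isLt
  -- val facts for a and b
  have habv : a.val ≠ 0 ∧ a.val ≠ 1 ∧ b.val ≠ 1 := by
    have h1 := ha1; have h2 := hab; have h3 := hbn
    simp only [cpos_val, h1v] at h1 h2
    split_ifs at h1 h2 <;> omega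
  obtain ⟨ha0v, ha1v, hb1v⟩ := habv
  have hane : a ≠ b := by
    intro hc; rw [hc] at hab; omega
  -- membership criteria
  have mema : ∀ i, a ∈ necklaceOf π i ↔ cpos i a ≤ cpos i 1 := by
    intro i; rw [mem_necklaceOf, hsa]
  have memb : ∀ i, b ∈ necklaceOf π i ↔ cpos i b ≤ cpos i 0 := by
    intro i; rw [mem_necklaceOf, hsb]
  have mema' : ∀ i, a ∈ necklaceOf π' i ↔ cpos i a ≤ cpos i 0 := by
    intro i; rw [mem_necklaceOf, h'a]
  have memb' : ∀ i, b ∈ necklaceOf π' i ↔ cpos i b ≤ cpos i 1 := by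
    intro i; rw [mem_necklaceOf, h'b]
  have memo : ∀ i k, k ≠ a → k ≠ b → (k ∈ necklaceOf π' i ↔ k ∈ necklaceOf π i) := by
    intro i k hka hkb
    rw [mem_necklaceOf, mem_necklaceOf, hof k hka hkb]
  -- membership at index 1
  have m1 : a ∉ necklaceOf π 1 := by
    rw [mema]
    have h1 := ha1
    simp only [cpos_val, h1v] at h1 ⊢
    split_ifs at h1 ⊢ <;> omega
  have m2 : b ∈ necklaceOf π 1 := by
    rw [memb]
    simp only [cpos_val, h1v, h0v]
    split_ifs <;> omega
  have m3 : a ∈ necklaceOf π' 1 := by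
    rw [mema']
    simp only [cpos_val, h1v, h0v]
    split_ifs <;> omega
  have m4 : b ∉ necklaceOf π' 1 := by
    rw [memb']
    have h2 := hab; have h1 := ha1
    simp only [cpos_val, h1v] at h1 h2 ⊢
    split_ifs at h1 h2 ⊢ <;> omega
  -- necklaces agree away from index 1
  have L2 : ∀ i, i ≠ 1 → necklaceOf π' i = necklaceOf π i := by
    intro i hi
    have hiv : i.val ≠ 1 := by
      intro hc; exact hi (Fin.val_injective (by rw [hc, h1v]))
    have hivn := i.isLt
    ext k
    by_cases hka : k = a
    · subst hka
      rw [mema' i, mema i]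
      simp only [cpos_val, h1v, h0v]
      split_ifs <;> omega
    · by_cases hkb : k = b
      · subst hkb
        rw [memb' i, memb i]
        simp only [cpos_val, h1v, h0v]
        split_ifs <;> omega
      · exact memo i k hka hkb
  -- Lemma A
  have LA : ∀ u, u ∈ necklaceOf π' 1 → u ∉ X → a ∈ X → u ≠ b →
      cpos 1 u < cpos 1 a := by
    intro u hu1 huX haX hub
    have hua : u ≠ a := fun hc => huX (hc ▸ haX)
    have hq' : π'.symm u = π.symm u := hof u hua hub
    have huq : cpos 1 u ≤ cpos 1 (π.symm u) := by
      rw [mem_necklaceOf, hq'] at hu1; exact hu1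
    have hqb : π.symm u ≠ 0 := by
      intro hc
      exact hub (by rw [hbdef, ← hc, Equiv.apply_symm_apply])
    have hqv : (π.symm u).val ≠ 0 := val_ne hqb
    by_contra hcon
    push_neg at hcon
    have huav : u.val ≠ a.val := val_ne hua
    have huvn := u.isLt
    have hqvn := (π.symm u).isLt
    have hu0 : u ∈ necklaceOf π' 0 := by
      rw [mem_necklaceOf, hq']
      have h1 := huq
      simp only [cpos_val, h1v, h0v] at h1 ⊢
      split_ifs at h1 ⊢ <;> omega
    have ha0' : a ∉ necklaceOf π' 0 := by
      rw [mema']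
      simp only [cpos_val, h0v]
      split_ifs <;> omega
    have hlt := hint 0 u (mem_sdiff.mpr ⟨hu0, huX⟩) a (mem_sdiff.mpr ⟨haX, ha0'⟩)
    have h1 := huq
    simp only [cpos_val, h1v, h0v] at h1 hcon hlt
    split_ifs at h1 hcon hlt <;> omega
  -- Lemma D
  have LD : ∀ v, v ∈ X → v ∉ necklaceOf π' 1 → b ∉ X →
      cpos 1 b < cpos 1 v := by
    intro v hvX hv1 hbX
    have hvb : v ≠ b := fun hc => hbX (hc ▸ hvX)
    have hva : v ≠ a := fun hc => hv1 (hc ▸ m3)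
    have hq' : π'.symm v = π.symm v := hof v hva hvb
    have hvq : ¬ cpos 1 v ≤ cpos 1 (π.symm v) := by
      rw [mem_necklaceOf, hq'] at hv1; exact hv1
    have hqa : π.symm v ≠ 1 := by
      intro hc
      exact hva (by rw [hadef, ← hc, Equiv.apply_symm_apply])
    have hq0 : π.symm v ≠ 0 := by
      intro hc
      exact hvb (by rw [hbdef, ← hc, Equiv.apply_symm_apply])
    have hq1v : (π.symm v).val ≠ 1 := by
      intro hc; exact hqa (Fin.val_injective (by rw [hc, h1v]))
    have hq0v : (π.symm v).val ≠ 0 := val_ne hq0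
    have hvbv : v.val ≠ b.val := val_ne hvb
    have hvvn := v.isLt
    have hqvn := (π.symm v).isLt
    by_contra hcon
    push_neg at hcon
    have hb2 : b ∈ necklaceOf π' (1 + 1) := by
      rw [memb']
      simp only [cpos_val, h1v, h2v]
      split_ifs <;> omega
    have hv2 : v ∉ necklaceOf π' (1 + 1) := by
      rw [mem_necklaceOf, hq']
      have h1 := hvq
      simp only [cpos_val, h1v, h2v] at h1 ⊢
      split_ifs at h1 ⊢ <;> omega
    have hlt := hint (1 + 1) b (mem_sdiff.mpr ⟨hb2, hbX⟩) v (mem_sdiff.mpr ⟨hvX, hv2⟩)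
    have h1 := hvq
    simp only [cpos_val, h1v, h2v] at h1 hcon hlt
    split_ifs at h1 hcon hlt <;> omega
  -- the three cases
  refine ⟨hcard, fun i => ?_⟩
  by_cases hi : i = 1
  · subst hi
    intro x hx y hy
    rw [mem_sdiff] at hx hy
    obtain ⟨hxN, hxX⟩ := hx
    obtain ⟨hyX, hyN⟩ := hy
    have hxa : x ≠ a := fun hc => m1 (hc ▸ hxN)
    have hyb : y ≠ b := fun hc => hyN (hc ▸ m2)
    by_cases hbX : b ∈ X
    · have hxb : x ≠ b := fun hc => hxX (hc ▸ hbX)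
      have hx1 : x ∈ necklaceOf π' 1 := (memo 1 x hxa hxb).mpr hxN
      by_cases hya : y = a
      · subst hya
        exact LA x hx1 hxX hyX hxb
      · have hy1 : y ∉ necklaceOf π' 1 := fun hc => hyN ((memo 1 y hya hyb).mp hc)
        exact hint 1 x (mem_sdiff.mpr ⟨hx1, hxX⟩) y (mem_sdiff.mpr ⟨hyX, hy1⟩)
    · by_cases haX : a ∈ X
      · exfalso
        -- card of N'_1
        have hrpos : 0 < r := by
          rw [← hr 1]; exact card_pos.mpr ⟨b, m2⟩
        have hNeq : necklaceOf π' 1 = insert a ((necklaceOf π 1).erase b) := by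
          ext k
          simp only [mem_insert, mem_erase]
          constructor
          · intro hk
            by_cases hka : k = a
            · exact Or.inl hka
            · have hkb : k ≠ b := fun hc => m4 (hc ▸ hk)
              exact Or.inr ⟨hkb, (memo 1 k hka hkb).mp hk⟩
          · rintro (rfl | ⟨hkb, hk⟩)
            · exact m3
            · by_cases hka : k = a
              · exact hka ▸ m3
              · exact (memo 1 k hka hkb).mpr hk
        have hcard' : (necklaceOf π' 1).card = r := by
          rw [hNeq, card_insert_of_notMem (fun hc => m1 (mem_erase.mp hc).2),
            card_erase_of_mem m2, hr 1]
          omega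
        -- get v ∈ X \ N'_1
        by_cases hsub : X ⊆ necklaceOf π' 1
        · exact hne (eq_of_subset_of_card_le hsub (by rw [hcard', hcard]))
        · obtain ⟨v, hvX, hv1⟩ := not_subset.mp hsub
          have hsub2 : ¬ necklaceOf π' 1 ⊆ X := by
            intro hs
            have := eq_of_subset_of_card_le hs (by rw [hcard, hcard'])
            rw [← this] at hvX
            exact hv1 hvX
          obtain ⟨u, hu1, huX⟩ := not_subset.mp hsub2
          have hub : u ≠ b := fun hc => m4 (hc ▸ hu1)
          have hua : u ≠ a := fun hc => huX (hc ▸ haX)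
          have hvb : v ≠ b := fun hc => hbX (hc ▸ hvX)
          have hva : v ≠ a := fun hc => hv1 (hc ▸ m3)
          have hpu := LA u hu1 huX haX hub
          have hpv := LD v hvX hv1 hbX
          obtain ⟨m, hm⟩ := hsep
          have huN : u ∈ necklaceOf π 1 := (memo 1 u hua hub).mp hu1
          have hvN : v ∉ necklaceOf π 1 := fun hc => hv1 ((memo 1 v hva hvb).mpr hc)
          have hm1 := hm a (mem_sdiff.mpr ⟨haX, m1⟩) u (mem_sdiff.mpr ⟨huN, huX⟩)
          have hm2 := hm v (mem_sdiff.mpr ⟨hvX, hvN⟩) b (mem_sdiff.mpr ⟨m2, hbX⟩)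
          have huvn := u.isLt
          have hvvn := v.isLt
          have hmvn := m.isLt
          have h2 := hab
          have e1 := cpos_or 1 u
          have e2 := cpos_or 1 a
          have e3 := cpos_or 1 b
          have e4 := cpos_or 1 v
          rw [h1v] at e1 e2 e3 e4
          have e5 := cpos_or m a
          have e6 := cpos_or m u
          have e7 := cpos_or m v
          have e8 := cpos_or m b
          omega
      · have hya : y ≠ a := fun hc => haX (hc ▸ hyX)
        have hy1 : y ∉ necklaceOf π' 1 := fun hc => hyN ((memo 1 y hya hyb).mp hc)
        by_cases hxb : x = b
        · subst hxb
          exact LD y hyX hy1 hbX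
        · exact hint 1 x
            (mem_sdiff.mpr ⟨(memo 1 x hxa hxb).mpr hxN, hxX⟩)
            y (mem_sdiff.mpr ⟨hyX, hy1⟩)
  · rw [← L2 i hi]
    exact hint i
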